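/- For every positive integer k, the spider graph S*_k satisfies Sb_k(S*_k) = 2k: some set of 2k edges has removal increasing the domination number by exactly k, and no set of fewer than 2k edges does. This shows the upper bound Sb_k(T) ≤ 2k for trees is sharp. -/

import Mathlib

/-- A finite set of vertices `D` is a dominating set of `G` if every vertex
is in `D` or adjacent to a vertex in `D`. -/
def SimpleGraph.IsDominatingSet {V : Type*} (G : SimpleGraph V) (D : Finset V) : Prop :=
  ∀ v : V, v ∈ D ∨ ∃ u ∈ D, G.Adj u v

/-- The domination number of `G`: the minimum cardinality of a dominating set. -/
noncomputable def SimpleGraph.domNum {V : Type*} (G : SimpleGraph V) : ℕ :=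
  sInf {n : ℕ | ∃ D : Finset V, G.IsDominatingSet D ∧ D.card = n}

/-- The `k`-synchronous bondage number of `G`: the minimum cardinality of a set of edges
whose deletion increases the domination number by exactly `k`.  (`Sb 1` is the classical
bondage number.) -/
noncomputable def SimpleGraph.synchBondage {V : Type*} (G : SimpleGraph V) (k : ℕ) : ℕ :=
  sInf {m : ℕ | ∃ E' : Finset (Sym2 V), ↑E' ⊆ G.edgeSet ∧
    (G.deleteEdges ↑E').domNum = G.domNum + k ∧ E'.card = m}

/-- The vertex type of the spider graph `S*_k`: a root, a pendant vertex `z` attached to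
the root, vertices `x i` attached to the root, and a leaf `y i` attached to each `x i`. -/
def SpiderV (k : ℕ) := Unit ⊕ Unit ⊕ Fin k ⊕ Fin k

instance (k : ℕ) : Fintype (SpiderV k) := by unfold SpiderV; infer_instance
instance (k : ℕ) : DecidableEq (SpiderV k) := by unfold SpiderV; infer_instance

/-- The base relation of the spider graph: the root (`inl ()`) is joined to `z`
(`inr (inl ())`) and to each `x i` (`inr (inr (inl i))`), and each `x i` is joined to the
leaf `y i` (`inr (inr (inr i))`). -/
def spiderRel (k : ℕ) : SpiderV k → SpiderV k → Prop
  | Sum.inl _, Sum.inr (Sum.inl _) => True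
  | Sum.inl _, Sum.inr (Sum.inr (Sum.inl _)) => True
  | Sum.inr (Sum.inr (Sum.inl i)), Sum.inr (Sum.inr (Sum.inr j)) => i = j
  | _, _ => False

/-- The spider graph `S*_k` on `2k + 2` vertices. -/
def spiderGraph (k : ℕ) : SimpleGraph (SpiderV k) :=
  SimpleGraph.fromRel (spiderRel k)

namespace Sp
open SimpleGraph

/- ### generic domination lemmas -/

lemma domNum_le {V : Type*} {G : SimpleGraph V} {D : Finset V}
    (hD : G.IsDominatingSet D) : G.domNum ≤ D.card :=
  Nat.sInf_le ⟨D, hD, rfl⟩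

lemma univ_dom {V : Type*} [Fintype V] (G : SimpleGraph V) :
    G.IsDominatingSet Finset.univ := fun v => Or.inl (Finset.mem_univ v)

lemma exists_min {V : Type*} [Fintype V] (G : SimpleGraph V) :
    ∃ D : Finset V, G.IsDominatingSet D ∧ D.card = G.domNum := by
  have h : {n : ℕ | ∃ D : Finset V, G.IsDominatingSet D ∧ D.card = n}.Nonempty :=
    ⟨_, Finset.univ, univ_dom G, rfl⟩
  exact Nat.sInf_mem h

lemma domNum_le_of_two_edges {V : Type*} [Fintype V] [DecidableEq V] (H : SimpleGraph V)
    {e1 e2 : Sym2 V} (h1 : e1 ∈ H.edgeSet) (h2 : e2 ∈ H.edgeSet) (hne : e1 ≠ e2) :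
    H.domNum ≤ Fintype.card V - 2 := by
  induction e1 using Sym2.ind with | _ p q => ?_
  induction e2 using Sym2.ind with | _ c d => ?_
  rw [SimpleGraph.mem_edgeSet] at h1 h2
  have hpq : p ≠ q := h1.ne
  have hcd : c ≠ d := h2.ne
  have key : ∃ a b a' b', a ≠ b ∧ H.Adj a' a ∧ a' ≠ a ∧ a' ≠ b ∧ H.Adj b' b ∧ b' ≠ a ∧ b' ≠ b := by
    by_cases hqc : q = c
    · subst hqc
      have hpd : p ≠ d := by rintro rfl; exact hne (by rw [Sym2.eq_swap])
      exact ⟨p, d, q, q, hpd, h1.symm, hpq.symm, hcd, h2, hpq.symm, hcd⟩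
    · by_cases hqd : q = d
      · subst hqd
        have hpc : p ≠ c := by rintro rfl; exact hne rfl
        exact ⟨p, c, q, q, hpc, h1.symm, hpq.symm, fun h => hcd h.symm, h2.symm, hpq.symm,
          fun h => hcd h.symm⟩
      · by_cases hpc : p = c
        · subst hpc
          exact ⟨q, d, p, p, hqd, h1, hpq, hcd, h2, hpq, hcd⟩
        · by_cases hpd : p = d
          · subst hpd
            exact ⟨q, c, p, p, hqc, h1, hpq, fun h => hcd h.symm, h2.symm, hpq,
              fun h => hcd h.symm⟩
          · exact ⟨p, c, q, d, hpc, h1.symm, hpq.symm, hqc, h2.symm, fun h => hpd h.symm,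
              fun h => hcd h.symm⟩
  obtain ⟨a, b, a', b', hab, ha'a, ha'1, ha'2, hb'b, hb'1, hb'2⟩ := key
  have hdom : H.IsDominatingSet (Finset.univ \ {a, b}) := by
    intro v
    by_cases hva : v = a
    · subst hva; exact Or.inr ⟨a', by simp [ha'1, ha'2], ha'a⟩
    · by_cases hvb : v = b
      · subst hvb; exact Or.inr ⟨b', by simp [hb'1, hb'2], hb'b⟩
      · exact Or.inl (by simp [hva, hvb])
  have hcard : (Finset.univ \ ({a, b} : Finset V)).card = Fintype.card V - 2 := by
    rw [Finset.card_sdiff_of_subset (Finset.subset_univ _), Finset.card_univ,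
      Finset.card_insert_of_notMem (by simp [hab]), Finset.card_singleton]
  calc H.domNum ≤ _ := domNum_le hdom
    _ = _ := hcard

/- ### spider vertices -/

variable {k : ℕ}
abbrev R (k : ℕ) : SpiderV k := Sum.inl ()
abbrev Z (k : ℕ) : SpiderV k := Sum.inr (Sum.inl ())
abbrev X (i : Fin k) : SpiderV k := Sum.inr (Sum.inr (Sum.inl i))
abbrev Y (i : Fin k) : SpiderV k := Sum.inr (Sum.inr (Sum.inr i))

@[simp] lemma X_eq_X {i j : Fin k} : (X i : SpiderV k) = X j ↔ i = j :=
  ⟨fun h => Sum.inl.inj (Sum.inr.inj (Sum.inr.inj h)), fun h => by rw [h]⟩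
@[simp] lemma Y_eq_Y {i j : Fin k} : (Y i : SpiderV k) = Y j ↔ i = j :=
  ⟨fun h => Sum.inr.inj (Sum.inr.inj (Sum.inr.inj h)), fun h => by rw [h]⟩
@[simp] lemma X_ne_Y {i j : Fin k} : (X i : SpiderV k) ≠ Y j :=
  fun h => by cases h
@[simp] lemma Y_ne_X {i j : Fin k} : (Y i : SpiderV k) ≠ X j := fun h => X_ne_Y h.symm
@[simp] lemma R_ne_Z : (R k) ≠ Z k := fun h => by cases h
@[simp] lemma Z_ne_R : (Z k) ≠ R k := fun h => R_ne_Z h.symm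
@[simp] lemma R_ne_X {i : Fin k} : R k ≠ X i := fun h => by cases h
@[simp] lemma X_ne_R {i : Fin k} : X i ≠ R k := fun h => R_ne_X h.symm
@[simp] lemma R_ne_Y {i : Fin k} : R k ≠ Y i := fun h => by cases h
@[simp] lemma Y_ne_R {i : Fin k} : Y i ≠ R k := fun h => R_ne_Y h.symm
@[simp] lemma Z_ne_X {i : Fin k} : Z k ≠ X i := fun h => by cases h
@[simp] lemma X_ne_Z {i : Fin k} : X i ≠ Z k := fun h => Z_ne_X h.symm
@[simp] lemma Z_ne_Y {i : Fin k} : Z k ≠ Y i := fun h => by cases h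
@[simp] lemma Y_ne_Z {i : Fin k} : Y i ≠ Z k := fun h => Z_ne_Y h.symm

lemma X_inj : Function.Injective (X (k := k)) := fun _ _ h => X_eq_X.mp h
lemma Y_inj : Function.Injective (Y (k := k)) := fun _ _ h => Y_eq_Y.mp h

lemma card_spiderV : Fintype.card (SpiderV k) = 2 * k + 2 := by
  have e : SpiderV k ≃ (Unit ⊕ Unit ⊕ Fin k ⊕ Fin k) := Equiv.refl _
  rw [Fintype.card_congr e]; simp; ring

lemma adj_RZ : (spiderGraph k).Adj (R k) (Z k) := ⟨R_ne_Z, Or.inl trivial⟩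
lemma adj_RX (i : Fin k) : (spiderGraph k).Adj (R k) (X i) := ⟨R_ne_X, Or.inl trivial⟩
lemma adj_XY (i : Fin k) : (spiderGraph k).Adj (X i) (Y i) :=
  ⟨X_ne_Y, Or.inl (by simp [spiderRel])⟩

lemma adj_cases {a b : SpiderV k} (h : (spiderGraph k).Adj a b) :
    (a = R k ∧ b = Z k) ∨ (b = R k ∧ a = Z k) ∨ (∃ i, a = R k ∧ b = X i) ∨
    (∃ i, b = R k ∧ a = X i) ∨ (∃ i, a = X i ∧ b = Y i) ∨ (∃ i, b = X i ∧ a = Y i) := by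
  obtain ⟨hne, h | h⟩ := h <;>
    rcases a with _ | _ | i | i <;> rcases b with _ | _ | j | j <;>
      simp_all [spiderRel, R, Z, X, Y] <;> aesop

lemma adj_to_Z {u : SpiderV k} (h : (spiderGraph k).Adj u (Z k)) : u = R k := by
  rcases adj_cases h with ⟨h1, _⟩ | ⟨_, h2⟩ | ⟨i, _, h2⟩ | ⟨i, h1, _⟩ | ⟨i, _, h2⟩ | ⟨i, h1, _⟩ <;>
    simp_all

lemma adj_to_Y {u : SpiderV k} {i : Fin k} (h : (spiderGraph k).Adj u (Y i)) : u = X i := by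
  rcases adj_cases h with ⟨_, h2⟩ | ⟨h1, _⟩ | ⟨j, _, h2⟩ | ⟨j, h1, _⟩ | ⟨j, h1, h2⟩ | ⟨j, h1, h2⟩ <;>
    simp_all

/- ### the deleted edge set -/

def Edel (k : ℕ) : Finset (Sym2 (SpiderV k)) :=
  (Finset.univ.image fun i => s(R k, X i)) ∪ (Finset.univ.image fun i => s(X i, Y i))

lemma mem_Edel {e : Sym2 (SpiderV k)} :
    e ∈ Edel k ↔ (∃ i, e = s(R k, X i)) ∨ (∃ i, e = s(X i, Y i)) := by
  simp [Edel, eq_comm]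

lemma RZ_not_mem_Edel : s(R k, Z k) ∉ Edel k := by
  rw [mem_Edel]
  rintro (⟨i, h⟩ | ⟨i, h⟩) <;> rw [Sym2.eq_iff] at h <;> simp_all

lemma eRX_inj : Function.Injective (fun i : Fin k => s(R k, X i)) := by
  intro i j h
  simp only [Sym2.eq_iff] at h
  rcases h with ⟨-, h⟩ | ⟨h1, -⟩
  · exact X_eq_X.mp h
  · exact absurd h1 R_ne_X

lemma eXY_inj : Function.Injective (fun i : Fin k => s(X i, Y i)) := by
  intro i j h
  simp only [Sym2.eq_iff] at h
  rcases h with ⟨h, -⟩ | ⟨h1, -⟩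
  · exact X_eq_X.mp h
  · exact absurd h1 X_ne_Y

lemma Edel_disj : Disjoint ((Finset.univ : Finset (Fin k)).image fun i => s(R k, X i))
    (Finset.univ.image fun i => s(X i, Y i)) := by
  rw [Finset.disjoint_left]
  rintro e he1 he2
  simp only [Finset.mem_image, Finset.mem_univ, true_and] at he1 he2
  obtain ⟨i, rfl⟩ := he1
  obtain ⟨j, hj⟩ := he2
  rw [Sym2.eq_iff] at hj
  simp_all

lemma Edel_card : (Edel k).card = 2 * k := by
  rw [Edel, Finset.card_union_of_disjoint Edel_disj,
    Finset.card_image_of_injective _ eRX_inj, Finset.card_image_of_injective _ eXY_inj,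
    Finset.card_univ, Fintype.card_fin]
  ring

lemma Edel_subset : ↑(Edel k) ⊆ (spiderGraph k).edgeSet := by
  intro e he
  rw [Finset.mem_coe, mem_Edel] at he
  rcases he with ⟨i, rfl⟩ | ⟨i, rfl⟩
  · exact adj_RX i
  · exact adj_XY i

def Sall (k : ℕ) : Finset (Sym2 (SpiderV k)) := insert s(R k, Z k) (Edel k)

lemma Sall_card : (Sall k).card = 2 * k + 1 := by
  rw [Sall, Finset.card_insert_of_notMem RZ_not_mem_Edel, Edel_card]

lemma Sall_subset : ↑(Sall k) ⊆ (spiderGraph k).edgeSet := by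
  intro e he
  rw [Finset.mem_coe, Sall, Finset.mem_insert] at he
  rcases he with rfl | he
  · exact adj_RZ
  · exact Edel_subset he

/- ### adjacency after deleting `Edel` -/

lemma H0_adj {a b : SpiderV k} :
    ((spiderGraph k).deleteEdges ↑(Edel k)).Adj a b ↔
      (a = R k ∧ b = Z k) ∨ (a = Z k ∧ b = R k) := by
  rw [SimpleGraph.deleteEdges_adj]
  constructor
  · rintro ⟨hadj, hmem⟩
    rw [Finset.mem_coe, mem_Edel] at hmem
    rcases adj_cases hadj with ⟨h1, h2⟩ | ⟨h1, h2⟩ | ⟨i, h1, h2⟩ | ⟨i, h1, h2⟩ |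
        ⟨i, h1, h2⟩ | ⟨i, h1, h2⟩
    · exact Or.inl ⟨h1, h2⟩
    · exact Or.inr ⟨h2, h1⟩
    · exact absurd (Or.inl ⟨i, by rw [h1, h2]⟩) hmem
    · exact absurd (Or.inl ⟨i, by rw [h1, h2, Sym2.eq_swap]⟩) hmem
    · exact absurd (Or.inr ⟨i, by rw [h1, h2]⟩) hmem
    · exact absurd (Or.inr ⟨i, by rw [h1, h2, Sym2.eq_swap]⟩) hmem
  · rintro (⟨rfl, rfl⟩ | ⟨rfl, rfl⟩)
    · exact ⟨adj_RZ, RZ_not_mem_Edel⟩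
    · refine ⟨adj_RZ.symm, ?_⟩
      rw [Sym2.eq_swap]
      exact RZ_not_mem_Edel

/- ### domination number of the spider -/

lemma domNum_spider : (spiderGraph k).domNum = k + 1 := by
  apply le_antisymm
  · have hdom : (spiderGraph k).IsDominatingSet (insert (R k) (Finset.univ.image X)) := by
      intro v
      rcases v with _ | _ | i | i
      · exact Or.inl (Finset.mem_insert_self _ _)
      · exact Or.inr ⟨R k, by simp, adj_RZ⟩
      · exact Or.inl (Finset.mem_insert_of_mem (Finset.mem_image_of_mem X (Finset.mem_univ i)))
      · exact Or.inr ⟨X i, by simp, adj_XY i⟩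
    calc (spiderGraph k).domNum ≤ _ := domNum_le hdom
      _ = k + 1 := by
        rw [Finset.card_insert_of_notMem (by simp),
          Finset.card_image_of_injective _ X_inj]
        simp
  · obtain ⟨D, hD, hcard⟩ := exists_min (spiderGraph k)
    rw [← hcard]
    set w : SpiderV k := if R k ∈ D then R k else Z k with hw
    set f : Fin k → SpiderV k := fun i => if X i ∈ D then X i else Y i with hf
    have hfD : ∀ i, f i ∈ D := by
      intro i
      rcases hD (Y i) with h | ⟨u, hu, hadj⟩
      · rw [hf]
        by_cases hx : X i ∈ D <;> simp [hx, h]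
      · have := adj_to_Y hadj
        subst this
        rw [hf]
        simp [hu]
    have hwD : w ∈ D := by
      by_cases hr : R k ∈ D
      · rw [hw]; simp [hr]
      · rcases hD (Z k) with h | ⟨u, hu, hadj⟩
        · rw [hw]; simp [hr, h]
        · exact absurd (adj_to_Z hadj ▸ hu) hr
    have hsub : insert w (Finset.univ.image f) ⊆ D := by
      intro v hv
      rw [Finset.mem_insert] at hv
      rcases hv with rfl | hv
      · exact hwD
      · obtain ⟨i, -, rfl⟩ := Finset.mem_image.mp hv
        exact hfD i
    have hfinj : Function.Injective f := by
      intro i j h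
      rw [hf] at h
      by_cases h1 : X i ∈ D <;> by_cases h2 : X j ∈ D <;> simp [h1, h2] at h <;> try exact h
    have hwmem : w ∉ Finset.univ.image f := by
      intro hmem
      obtain ⟨i, -, hi⟩ := Finset.mem_image.mp hmem
      rw [hf, hw] at hi
      by_cases h1 : X i ∈ D <;> by_cases hr : R k ∈ D <;> simp [h1, hr] at hi
    have hcard2 : (insert w (Finset.univ.image f)).card = k + 1 := by
      rw [Finset.card_insert_of_notMem hwmem, Finset.card_image_of_injective _ hfinj,
        Finset.card_univ, Fintype.card_fin]
    calc k + 1 = _ := hcard2.symm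
      _ ≤ D.card := Finset.card_le_card hsub

/- ### domination number after deleting `Edel` -/

lemma domNum_H0 : ((spiderGraph k).deleteEdges ↑(Edel k)).domNum = 2 * k + 1 := by
  apply le_antisymm
  · have hdom : ((spiderGraph k).deleteEdges ↑(Edel k)).IsDominatingSet
        (Finset.univ.erase (Z k)) := by
      intro v
      by_cases hv : v = Z k
      · subst hv
        exact Or.inr ⟨R k, by simp, H0_adj.mpr (Or.inl ⟨rfl, rfl⟩)⟩
      · exact Or.inl (by simp [hv])
    calc _ ≤ _ := domNum_le hdom
      _ = 2 * k + 1 := by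
        rw [Finset.card_erase_of_mem (Finset.mem_univ _), Finset.card_univ, card_spiderV]
        omega
  · obtain ⟨D, hD, hcard⟩ := exists_min ((spiderGraph k).deleteEdges ↑(Edel k))
    rw [← hcard]
    have hX : ∀ i, X i ∈ D := by
      intro i
      rcases hD (X i) with h | ⟨u, hu, hadj⟩
      · exact h
      · rcases H0_adj.mp hadj with ⟨_, h2⟩ | ⟨_, h2⟩ <;> simp_all
    have hY : ∀ i, Y i ∈ D := by
      intro i
      rcases hD (Y i) with h | ⟨u, hu, hadj⟩
      · exact h
      · rcases H0_adj.mp hadj with ⟨_, h2⟩ | ⟨_, h2⟩ <;> simp_all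
    set w : SpiderV k := if R k ∈ D then R k else Z k with hw
    have hwD : w ∈ D := by
      by_cases hr : R k ∈ D
      · rw [hw]; simp [hr]
      · rcases hD (Z k) with h | ⟨u, hu, hadj⟩
        · rw [hw]; simp [hr, h]
        · rcases H0_adj.mp hadj with ⟨h1, _⟩ | ⟨_, h2⟩
          · exact absurd (h1 ▸ hu) hr
          · exact absurd h2 Z_ne_R
    have hsub : insert w ((Finset.univ.image X) ∪ (Finset.univ.image Y)) ⊆ D := by
      intro v hv
      rw [Finset.mem_insert] at hv
      rcases hv with rfl | hv
      · exact hwD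
      · rcases Finset.mem_union.mp hv with h | h
        · obtain ⟨i, -, rfl⟩ := Finset.mem_image.mp h
          exact hX i
        · obtain ⟨i, -, rfl⟩ := Finset.mem_image.mp h
          exact hY i
    have hXYdisj : Disjoint ((Finset.univ : Finset (Fin k)).image X) (Finset.univ.image Y) := by
      rw [Finset.disjoint_left]
      rintro e he1 he2
      simp only [Finset.mem_image, Finset.mem_univ, true_and] at he1 he2
      obtain ⟨i, rfl⟩ := he1
      obtain ⟨j, hj⟩ := he2
      exact Y_ne_X hj
    have hwmem : w ∉ (Finset.univ.image X) ∪ (Finset.univ.image Y) := by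
      intro hmem
      rcases Finset.mem_union.mp hmem with h | h <;>
        obtain ⟨i, -, hi⟩ := Finset.mem_image.mp h <;>
        rw [hw] at hi <;> by_cases hr : R k ∈ D <;> simp [hr] at hi
    have hcard2 : (insert w ((Finset.univ.image X) ∪ (Finset.univ.image Y))).card
        = 2 * k + 1 := by
      rw [Finset.card_insert_of_notMem hwmem, Finset.card_union_of_disjoint hXYdisj,
        Finset.card_image_of_injective _ X_inj, Finset.card_image_of_injective _ Y_inj,
        Finset.card_univ, Fintype.card_fin]
      ring
    calc 2 * k + 1 = _ := hcard2.symm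
      _ ≤ D.card := Finset.card_le_card hsub

/- ### lower bound on the number of deleted edges -/

lemma edel_lower {E' : Finset (Sym2 (SpiderV k))} (hsub : ↑E' ⊆ (spiderGraph k).edgeSet)
    (hdn : ((spiderGraph k).deleteEdges ↑E').domNum = 2 * k + 1) : 2 * k ≤ E'.card := by
  by_contra hlt
  push_neg at hlt
  have h2 : 2 ≤ (Sall k \ E').card := by
    have := Finset.le_card_sdiff E' (Sall k)
    rw [Sall_card] at this
    omega
  obtain ⟨e1, he1, e2, he2, hne⟩ := Finset.one_lt_card.mp (by omega : 1 < (Sall k \ E').card)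
  have hmem : ∀ e ∈ Sall k \ E', e ∈ ((spiderGraph k).deleteEdges ↑E').edgeSet := by
    intro e he
    rw [Finset.mem_sdiff] at he
    rw [SimpleGraph.edgeSet_deleteEdges]
    exact ⟨Sall_subset he.1, he.2⟩
  have := domNum_le_of_two_edges _ (hmem e1 he1) (hmem e2 he2) hne
  rw [card_spiderV, hdn] at this
  omega

end Sp

/-- `Sb_k(S*_k) = 2k`: some set of `2k` edges of the spider graph has
deletion increasing the domination number by exactly `k`, and no smaller set does. -/
theorem synchBondage_spiderGraph (k : ℕ) (hk : 1 ≤ k) :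
    (∃ E' : Finset (Sym2 (SpiderV k)), ↑E' ⊆ (spiderGraph k).edgeSet ∧ E'.card = 2 * k ∧
      ((spiderGraph k).deleteEdges ↑E').domNum = (spiderGraph k).domNum + k) ∧
    (spiderGraph k).synchBondage k = 2 * k := by
  have hmain : ((spiderGraph k).deleteEdges ↑(Sp.Edel k)).domNum
      = (spiderGraph k).domNum + k := by
    rw [Sp.domNum_H0, Sp.domNum_spider]; ring
  refine ⟨⟨Sp.Edel k, Sp.Edel_subset, Sp.Edel_card, hmain⟩, ?_⟩
  have hmem : 2 * k ∈ {m : ℕ | ∃ E' : Finset (Sym2 (SpiderV k)),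
      ↑E' ⊆ (spiderGraph k).edgeSet ∧
      ((spiderGraph k).deleteEdges ↑E').domNum = (spiderGraph k).domNum + k ∧ E'.card = m} :=
    ⟨Sp.Edel k, Sp.Edel_subset, hmain, Sp.Edel_card⟩
  refine le_antisymm (Nat.sInf_le hmem) (le_csInf ⟨_, hmem⟩ ?_)
  rintro m ⟨E', hsub, hdn, rfl⟩
  apply Sp.edel_lower hsub
  rw [hdn, Sp.domNum_spider]; ring
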